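/- arXiv:1106.4295 — 6 statements merged into one kernel-verified Lean document; each statement's English description precedes it below -/
import Mathlib

section
/- If A and B are effects on a Hilbert space (operators with 0 ≤ A ≤ I, 0 ≤ B ≤ I), A is a projection (A² = A), and A = tB + (1-t)C for effects B, C and 0 < t < 1, then B = C = A. In other words, projections are extreme points of the convex set of effects. -/
set_option maxHeartbeats 1000000
set_option synthInstance.maxHeartbeats 1000000

open scoped ComplexOrder

variable {H : Type*} [NormedAddCommGroup H] [InnerProductSpace ℂ H] [CompleteSpace H]

private lemma aux_smul_nonneg (t : ℝ) (ht : 0 ≤ t) {P : H →L[ℂ] H} (hP : 0 ≤ P) :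
    0 ≤ (t : ℂ) • P := by
  have h := star_left_conjugate_nonneg hP (((Real.sqrt t : ℝ) : ℂ) • (1 : H →L[ℂ] H))
  have he : star (((Real.sqrt t : ℝ) : ℂ) • (1 : H →L[ℂ] H)) * P *
      (((Real.sqrt t : ℝ) : ℂ) • (1 : H →L[ℂ] H)) = (t : ℂ) • P := by
    rw [star_smul, star_one, Complex.star_def, Complex.conj_ofReal, smul_mul_assoc, one_mul,
      mul_smul_comm, mul_one, smul_smul, ← Complex.ofReal_mul, Real.mul_self_sqrt ht]
  rwa [he] at h

private lemma aux_conj_zero {b x : H →L[ℂ] H} (hb : 0 ≤ b)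
    (h : star x * b * x = 0) : b * x = 0 := by
  set s := CFC.sqrt b with hs
  have hmul : s * s = b := CFC.sqrt_mul_sqrt_self b hb
  have hs0 : (0 : H →L[ℂ] H) ≤ s := CFC.sqrt_nonneg b
  have hsa : star s = s := (IsSelfAdjoint.of_nonneg hs0).star_eq
  have h2 : star (s * x) * (s * x) = 0 := by
    rw [star_mul, hsa, mul_assoc, ← mul_assoc s, hmul, ← mul_assoc, h]
  have h3 : s * x = 0 := CStarRing.star_mul_self_eq_zero_iff _ |>.mp h2
  rw [← hmul, mul_assoc, h3, mul_zero]

private lemma aux_key (A B C : H →L[ℂ] H)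
    (hA₀ : 0 ≤ A) (hB₀ : 0 ≤ B) (hC₀ : 0 ≤ C)
    (hproj : A * A = A)
    (t : ℝ) (ht₀ : 0 < t) (ht₁ : t < 1)
    (hmix : A = (t : ℂ) • B + ((1 - t : ℝ) : ℂ) • C) :
    B * (1 - A) = 0 := by
  have hsaA : star A = A := (IsSelfAdjoint.of_nonneg hA₀).star_eq
  have hsaA' : star (1 - A) = 1 - A := by rw [star_sub, star_one, hsaA]
  have hz : (1 - A) * A * (1 - A) = 0 := by
    have h1 : (1 - A) * A = 0 := by rw [sub_mul, one_mul, hproj, sub_self]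
    rw [h1, zero_mul]
  have hPB : 0 ≤ (1 - A) * B * (1 - A) := by
    have := star_left_conjugate_nonneg hB₀ (1 - A); rwa [hsaA'] at this
  have hPC : 0 ≤ (1 - A) * C * (1 - A) := by
    have := star_left_conjugate_nonneg hC₀ (1 - A); rwa [hsaA'] at this
  have hsum : (t : ℂ) • ((1 - A) * B * (1 - A)) +
      ((1 - t : ℝ) : ℂ) • ((1 - A) * C * (1 - A)) = 0 := by
    have : (1 - A) * A * (1 - A) =
        (t : ℂ) • ((1 - A) * B * (1 - A)) +
        ((1 - t : ℝ) : ℂ) • ((1 - A) * C * (1 - A)) := by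
      rw [show (1 - A) * A * (1 - A) = (1 - A) * ((t : ℂ) • B + ((1 - t : ℝ) : ℂ) • C) * (1 - A) by
        rw [← hmix]]
      simp [mul_add, add_mul, mul_smul_comm, smul_mul_assoc]
    rw [← this, hz]
  have hX : 0 ≤ (t : ℂ) • ((1 - A) * B * (1 - A)) := aux_smul_nonneg t ht₀.le hPB
  have hY : 0 ≤ ((1 - t : ℝ) : ℂ) • ((1 - A) * C * (1 - A)) :=
    aux_smul_nonneg (1 - t) (by linarith) hPC
  have hX0 : (t : ℂ) • ((1 - A) * B * (1 - A)) = 0 := by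
    have hle : (t : ℂ) • ((1 - A) * B * (1 - A)) ≤ 0 := by
      rw [← hsum]
      calc (t : ℂ) • ((1 - A) * B * (1 - A))
          = (t : ℂ) • ((1 - A) * B * (1 - A)) + 0 := by rw [add_zero]
        _ ≤ _ := add_le_add le_rfl hY
    exact le_antisymm hle hX
  have hB0 : (1 - A) * B * (1 - A) = 0 := by
    have ht' : (t : ℂ) ≠ 0 := by exact_mod_cast ht₀.ne'
    exact (smul_eq_zero.mp hX0).resolve_left ht'
  exact aux_conj_zero hB₀ (by rwa [hsaA'])

/-- Projections are extreme points of the convex set of effects. -/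
theorem stmt_0 (A B C : H →L[ℂ] H)
    (hA₀ : 0 ≤ A) (hA₁ : A ≤ 1) (hB₀ : 0 ≤ B) (hB₁ : B ≤ 1) (hC₀ : 0 ≤ C) (hC₁ : C ≤ 1)
    (hproj : A * A = A)
    (t : ℝ) (ht₀ : 0 < t) (ht₁ : t < 1)
    (hmix : A = (t : ℂ) • B + ((1 - t : ℝ) : ℂ) • C) :
    B = A ∧ C = A := by
  have hproj' : (1 - A) * (1 - A) = 1 - A := by
    rw [sub_mul, mul_sub, mul_sub, one_mul, mul_one, hproj]; abel
  have hmix' : (1 - A) = (t : ℂ) • (1 - B) + ((1 - t : ℝ) : ℂ) • (1 - C) := by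
    rw [hmix]
    push_cast
    module
  have hmixC : A = ((1 - t : ℝ) : ℂ) • C + ((1 - (1 - t) : ℝ) : ℂ) • B := by
    rw [hmix]; push_cast; module
  have hmixC' : (1 - A) = ((1 - t : ℝ) : ℂ) • (1 - C) + ((1 - (1 - t) : ℝ) : ℂ) • (1 - B) := by
    rw [hmix']; push_cast; module
  have hA₀' : (0 : H →L[ℂ] H) ≤ 1 - A := by rwa [sub_nonneg]
  have hB₀' : (0 : H →L[ℂ] H) ≤ 1 - B := by rwa [sub_nonneg]
  have hC₀' : (0 : H →L[ℂ] H) ≤ 1 - C := by rwa [sub_nonneg]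
  have hBA : B * (1 - A) = 0 := aux_key A B C hA₀ hB₀ hC₀ hproj t ht₀ ht₁ hmix
  have hCA : C * (1 - A) = 0 :=
    aux_key A C B hA₀ hC₀ hB₀ hproj (1 - t) (by linarith) (by linarith) hmixC
  have hBA' : (1 - B) * (1 - (1 - A)) = 0 :=
    aux_key (1 - A) (1 - B) (1 - C) hA₀' hB₀' hC₀' hproj' t ht₀ ht₁ hmix'
  have hCA' : (1 - C) * (1 - (1 - A)) = 0 :=
    aux_key (1 - A) (1 - C) (1 - B) hA₀' hC₀' hB₀' hproj' (1 - t) (by linarith) (by linarith) hmixC'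
  rw [sub_sub_cancel, sub_mul, one_mul, sub_eq_zero] at hBA' hCA'
  rw [mul_sub, mul_one, sub_eq_zero] at hBA hCA
  exact ⟨by rw [hBA, ← hBA'], by rw [hCA, ← hCA']⟩
end

section
/- Let (A_n)_{n=1}^N be a discrete POVM (positive operators summing to the identity). Suppose that for every sequence (D_n) of self-adjoint operators with ‖D_n‖ ≤ 1 and Σ_n √A_n D_n √A_n = 0 one has √A_n D_n √A_n = 0 for all n. If moreover the A_n pairwise commute, then A_k A_l = 0 for all k ≠ l, and consequently each A_n is a projection. -/
set_option maxHeartbeats 1000000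
set_option synthInstance.maxHeartbeats 1000000

open scoped ComplexOrder NNReal

section aux

variable {𝔸 : Type*} [CStarAlgebra 𝔸]

lemma cfc_mem_elemental' (f : ℂ → ℂ) (a : 𝔸) : cfc f a ∈ StarAlgebra.elemental ℂ a := by
  refine cfc_cases (· ∈ StarAlgebra.elemental ℂ a) a f (zero_mem _) fun hf ha ↦ ?_
  rw [cfcHom_eq_of_isStarNormal]
  exact SetLike.coe_mem _

lemma commute_of_mem_elemental {a b x : 𝔸} (hb : IsSelfAdjoint b) (h : Commute a b)
    (hx : x ∈ StarAlgebra.elemental ℂ a) : Commute x b := by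
  have hcl : IsClosed {y : 𝔸 | Commute y b} := by
    have hset : {y : 𝔸 | Commute y b} = (fun y : 𝔸 ↦ y * b - b * y) ⁻¹' {0} := by
      ext y
      simp [Commute, SemiconjBy, sub_eq_zero]
    rw [hset]
    exact isClosed_singleton.preimage (by fun_prop)
  have hsub : (StarAlgebra.elemental ℂ a : Set 𝔸) ⊆ {y | Commute y b} := by
    refine closure_minimal ?_ hcl
    intro y hy
    induction hy using StarAlgebra.adjoin_induction with
    | mem z hz =>
      simp only [Set.mem_singleton_iff] at hz
      exact hz ▸ h
    | algebraMap r => exact Algebra.commute_algebraMap_left r b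
    | add u v hu hv pu pv => exact pu.add_left pv
    | mul u v hu hv pu pv => exact pu.mul_left pv
    | star u hu pu => simpa [hb.star_eq] using pu.star_star
  exact hsub hx

lemma commute_sqrt {𝔹 : Type*} [CStarAlgebra 𝔹] [PartialOrder 𝔹] [StarOrderedRing 𝔹]
    {a b : 𝔹} (ha : 0 ≤ a) (hb : IsSelfAdjoint b) (h : Commute a b) :
    Commute (CFC.sqrt a) b := by
  have h1 : CFC.sqrt a = cfc (fun x : ℝ≥0 ↦ NNReal.sqrt x) a := by
    rw [CFC.sqrt, cfcₙ_eq_cfc]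
  rw [h1, cfc_nnreal_eq_real _ _ ha, cfc_real_eq_complex _ (IsSelfAdjoint.of_nonneg ha)]
  exact commute_of_mem_elemental hb h (cfc_mem_elemental' _ a)

end aux

variable {H : Type*} [NormedAddCommGroup H] [InnerProductSpace ℂ H] [CompleteSpace H]

/-- Extremality criterion plus commutativity forces a discrete POVM to be sharp:
if every self-adjoint contraction perturbation `(D_n)` with `∑ √A_n D_n √A_n = 0`
satisfies `√A_n D_n √A_n = 0`, and the `A_n` pairwise commute, then `A_k A_l = 0` for
`k ≠ l` and each `A_n` is a projection. -/
theorem stmt_4 {N : ℕ} (A : Fin N → H →L[ℂ] H)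
    (hpos : ∀ n, 0 ≤ A n) (hsum : ∑ n, A n = 1)
    (hext : ∀ D : Fin N → H →L[ℂ] H, (∀ n, IsSelfAdjoint (D n)) → (∀ n, ‖D n‖ ≤ 1) →
      (∑ n, CFC.sqrt (A n) * D n * CFC.sqrt (A n)) = 0 →
      ∀ n, CFC.sqrt (A n) * D n * CFC.sqrt (A n) = 0)
    (hcomm : ∀ k l, A k * A l = A l * A k) :
    (∀ k l, k ≠ l → A k * A l = 0) ∧ (∀ n, A n * A n = A n) := by
  have hA1 : ∀ n, A n ≤ 1 := fun n =>
    hsum ▸ Finset.single_le_sum (fun m _ => hpos m) (Finset.mem_univ n)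
  have hsa : ∀ n, IsSelfAdjoint (A n) := fun n => IsSelfAdjoint.of_nonneg (hpos n)
  have hnorm : ∀ n, ‖A n‖ ≤ 1 := fun n =>
    (CStarAlgebra.norm_le_one_iff_of_nonneg _ (hpos n)).mpr (hA1 n)
  have hsq : ∀ n, CFC.sqrt (A n) * CFC.sqrt (A n) = A n := fun n =>
    CFC.sqrt_mul_sqrt_self _ (hpos n)
  have key : ∀ k l, k ≠ l → A k * A l = 0 := by
    intro k l hkl
    set D : Fin N → H →L[ℂ] H := fun n => if n = k then A l else if n = l then -(A k) else 0
      with hD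
    have hsa' : ∀ n, IsSelfAdjoint (D n) := by
      intro n
      simp only [hD]
      split_ifs
      · exact hsa l
      · exact (hsa k).neg
      · exact IsSelfAdjoint.zero _
    have hnorm' : ∀ n, ‖D n‖ ≤ 1 := by
      intro n
      simp only [hD]
      split_ifs
      · exact hnorm l
      · rw [norm_neg]; exact hnorm k
      · simp
    have hck : Commute (CFC.sqrt (A k)) (A l) := commute_sqrt (hpos k) (hsa l) (hcomm k l)
    have hcl : Commute (CFC.sqrt (A l)) (A k) := commute_sqrt (hpos l) (hsa k) (hcomm l k)
    have hk' : CFC.sqrt (A k) * D k * CFC.sqrt (A k) = A k * A l := by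
      simp only [hD, if_pos rfl]
      rw [hck.eq, mul_assoc, hsq, hcomm l k]
    have hl' : CFC.sqrt (A l) * D l * CFC.sqrt (A l) = -(A k * A l) := by
      simp only [hD, if_neg (Ne.symm hkl), eq_self_iff_true, if_true]
      rw [mul_neg, neg_mul, hcl.eq, mul_assoc, hsq]
    have hother : ∀ n, n ≠ k → n ≠ l → CFC.sqrt (A n) * D n * CFC.sqrt (A n) = 0 := by
      intro n h1 h2
      simp [hD, h1, h2]
    have hsum0 : (∑ n, CFC.sqrt (A n) * D n * CFC.sqrt (A n)) = 0 := by
      have hrw : (∑ n, CFC.sqrt (A n) * D n * CFC.sqrt (A n)) =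
          ∑ n ∈ ({k, l} : Finset (Fin N)), CFC.sqrt (A n) * D n * CFC.sqrt (A n) := by
        refine (Finset.sum_subset (Finset.subset_univ _) ?_).symm
        intro x _ hx
        simp only [Finset.mem_insert, Finset.mem_singleton] at hx
        push_neg at hx
        exact hother x hx.1 hx.2
      rw [hrw, Finset.sum_pair hkl, hk', hl', add_neg_cancel]
    have h0 := hext D hsa' hnorm' hsum0 k
    rw [hk'] at h0
    exact h0
  refine ⟨key, fun n => ?_⟩
  have h2 : ∑ m, A n * A m = A n * A n :=
    Finset.sum_eq_single n (fun m _ hm => key n m (Ne.symm hm))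
      (fun h => absurd (Finset.mem_univ n) h)
  calc A n * A n = ∑ m, A n * A m := h2.symm
    _ = A n * ∑ m, A m := (Finset.mul_sum _ _ _).symm
    _ = A n := by rw [hsum, mul_one]
end

section
/- If a discrete POVM (A_n)_{n=1}^N is an extreme point of the convex set of discrete POVMs on the same outcome set, then for any sequence (D_n) of self-adjoint operators with ‖D_n‖ ≤ 1 satisfying Σ_n √A_n D_n √A_n = 0, we have √A_n D_n √A_n = 0 for all n. -/
set_option maxHeartbeats 1000000
set_option synthInstance.maxHeartbeats 1000000

open scoped ComplexOrder

variable {H : Type*} [NormedAddCommGroup H] [InnerProductSpace ℂ H] [CompleteSpace H]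

/-- A discrete POVM on the outcome set `{1, …, N}`: positive operators summing to `1`. -/
def IsDiscretePOVM {N : ℕ} {H : Type*} [NormedAddCommGroup H] [InnerProductSpace ℂ H]
    [CompleteSpace H] (A : Fin N → H →L[ℂ] H) : Prop :=
  (∀ n, 0 ≤ A n) ∧ ∑ n, A n = 1

/-- Extremality of a discrete POVM in the convex set of discrete POVMs on the same
outcome set. -/
def IsExtremeDiscretePOVM {N : ℕ} {H : Type*} [NormedAddCommGroup H] [InnerProductSpace ℂ H]
    [CompleteSpace H] (A : Fin N → H →L[ℂ] H) : Prop :=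
  IsDiscretePOVM A ∧
  ∀ (B C : Fin N → H →L[ℂ] H) (t : ℝ), 0 < t → t < 1 →
    IsDiscretePOVM B → IsDiscretePOVM C →
    (∀ n, A n = (t : ℂ) • B n + ((1 - t : ℝ) : ℂ) • C n) → B = A ∧ C = A

/-- If a discrete POVM is extreme, then any self-adjoint contraction perturbation `(D_n)`
with `∑ √A_n D_n √A_n = 0` satisfies `√A_n D_n √A_n = 0` for all `n`. -/
theorem stmt_5 {N : ℕ} (A : Fin N → H →L[ℂ] H)
    (hext : IsExtremeDiscretePOVM A)
    (D : Fin N → H →L[ℂ] H) (hsa : ∀ n, IsSelfAdjoint (D n)) (hnorm : ∀ n, ‖D n‖ ≤ 1)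
    (hzero : (∑ n, CFC.sqrt (A n) * D n * CFC.sqrt (A n)) = 0) :
    ∀ n, CFC.sqrt (A n) * D n * CFC.sqrt (A n) = 0 := by
  obtain ⟨⟨hpos, hsum⟩, hextr⟩ := hext
  set S : Fin N → H →L[ℂ] H := fun n => CFC.sqrt (A n) with hSdef
  have hSsa : ∀ n, star (S n) = S n := fun n =>
    (IsSelfAdjoint.of_nonneg (CFC.sqrt_nonneg _))
  have hSS : ∀ n, S n * S n = A n := fun n => CFC.sqrt_mul_sqrt_self _ (hpos n)
  set X : Fin N → H →L[ℂ] H := fun n => S n * D n * S n with hXdef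
  -- one ≤ and -1 ≤ D n
  have hDle : ∀ n, D n ≤ 1 := by
    intro n
    calc D n ≤ algebraMap ℝ _ ‖D n‖ := (hsa n).le_algebraMap_norm_self
    _ ≤ algebraMap ℝ _ 1 := by
        have : (0:H →L[ℂ] H) ≤ algebraMap ℝ _ (1 - ‖D n‖) := by
          rw [Algebra.algebraMap_eq_smul_one]
          exact smul_nonneg (by linarith [hnorm n]) zero_le_one
        have h := add_le_add_left this (algebraMap ℝ (H →L[ℂ] H) ‖D n‖)
        simpa [← map_add] using h
    _ = 1 := map_one _
  have hDge : ∀ n, -(1:H →L[ℂ] H) ≤ D n := by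
    intro n
    have h1 : -(D n) ≤ 1 := by
      have hsa' : IsSelfAdjoint (-(D n)) := (hsa n).neg
      calc -(D n) ≤ algebraMap ℝ _ ‖-(D n)‖ := hsa'.le_algebraMap_norm_self
      _ ≤ algebraMap ℝ _ 1 := by
          have : (0:H →L[ℂ] H) ≤ algebraMap ℝ _ (1 - ‖-(D n)‖) := by
            rw [Algebra.algebraMap_eq_smul_one]
            exact smul_nonneg (by simpa using hnorm n) zero_le_one
          have h := add_le_add_left this (algebraMap ℝ (H →L[ℂ] H) ‖-(D n)‖)
          simpa [← map_add] using h
      _ = 1 := map_one _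
    exact neg_le.mp h1
  -- positivity of A n ± X n
  have hXle : ∀ n, 0 ≤ A n + X n := by
    intro n
    have h1 : (0:H →L[ℂ] H) ≤ 1 + D n := by
      have h := sub_nonneg.mpr (hDge n)
      simpa [sub_neg_eq_add, add_comm] using h
    have := star_left_conjugate_nonneg h1 (S n)
    rw [hSsa n] at this
    calc (0:H →L[ℂ] H) ≤ S n * (1 + D n) * S n := this
    _ = A n + X n := by
        simp only [mul_add, add_mul, mul_one, one_mul, hSS n, hXdef, mul_assoc]
  have hXge : ∀ n, 0 ≤ A n - X n := by
    intro n
    have h1 : (0:H →L[ℂ] H) ≤ 1 - D n :=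
      sub_nonneg.mpr (hDle n)
    have := star_left_conjugate_nonneg h1 (S n)
    rw [hSsa n] at this
    calc (0:H →L[ℂ] H) ≤ S n * (1 - D n) * S n := this
    _ = A n - X n := by
        simp only [mul_sub, sub_mul, mul_one, one_mul, hSS n, hXdef, mul_assoc]
  have hBpovm : IsDiscretePOVM (fun n => A n + X n) := by
    refine ⟨hXle, ?_⟩
    rw [Finset.sum_add_distrib, hsum, hzero, add_zero]
  have hCpovm : IsDiscretePOVM (fun n => A n - X n) := by
    refine ⟨hXge, ?_⟩
    rw [Finset.sum_sub_distrib, hsum, hzero, sub_zero]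
  have hconv : ∀ n, A n = ((1/2 : ℝ) : ℂ) • (A n + X n) + ((1 - (1/2) : ℝ) : ℂ) • (A n - X n) := by
    intro n
    have hc : ((1 - (1/2 : ℝ) : ℝ) : ℂ) = ((1/2 : ℝ) : ℂ) := by norm_num
    rw [hc]
    rw [smul_add, smul_sub]
    module
  have := hextr (fun n => A n + X n) (fun n => A n - X n) (1/2) (by norm_num) (by norm_num)
    hBpovm hCpovm hconv
  intro n
  have h := congrFun this.1 n
  have : X n = 0 := by
    have := congrArg (fun y => y - A n) h
    simpa [add_sub_cancel_left] using this
  simpa [hXdef] using this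
end

section
/- For a bounded measurable function f with 0 ≤ f ≤ 1 and a PVM E, the operator ∫ f dE is a projection if and only if f ∈ {0,1} E-almost everywhere. -/
set_option maxHeartbeats 1000000
set_option synthInstance.maxHeartbeats 1000000

open scoped ComplexOrder

variable {H : Type*} [NormedAddCommGroup H] [InnerProductSpace ℂ H] [CompleteSpace H]

open MeasureTheory

/-- A projection-valued measure on a measurable space, acting on `H`, together with its
family of diagonal scalar measures `μ x = ⟪E(·) x, x⟫` (used to express spectral
integrals weakly: `T = ∫ f dE` iff `⟪T x, x⟫ = ∫ f dμ_x` for all `x`). -/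
structure PVM (Ω : Type*) [MeasurableSpace Ω] (H : Type*) [NormedAddCommGroup H]
    [InnerProductSpace ℂ H] [CompleteSpace H] where
  toFun : Set Ω → (H →L[ℂ] H)
  pos' : ∀ X, MeasurableSet X → 0 ≤ toFun X
  proj' : ∀ X, MeasurableSet X → toFun X * toFun X = toFun X
  empty' : toFun ∅ = 0
  total' : toFun Set.univ = 1
  additive' : ∀ (f : ℕ → Set Ω), (∀ n, MeasurableSet (f n)) → Pairwise (Function.onFun Disjoint f) →
    ∀ x y : H, HasSum (fun n => (inner ℂ (toFun (f n) x) y : ℂ)) (inner ℂ (toFun (⋃ n, f n) x) y)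
  μ : H → Measure Ω
  μ_spec : ∀ (x : H) (X : Set Ω), MeasurableSet X →
    ((μ x) X).toReal = ((inner ℂ (toFun X x) x : ℂ)).re
  μ_fin : ∀ x : H, IsFiniteMeasure (μ x)

/-- For a measurable `f` with `0 ≤ f ≤ 1` and a PVM `E`, the spectral integral
`T = ∫ f dE` (expressed weakly via the diagonal measures of `E`) is a projection if and
only if `f ∈ {0, 1}` `E`-almost everywhere. -/
theorem stmt_12 {Ω : Type*} [MeasurableSpace Ω] (E : PVM Ω H)
    (f : Ω → ℝ) (hf : Measurable f) (hf₀ : ∀ y, 0 ≤ f y) (hf₁ : ∀ y, f y ≤ 1)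
    (T : H →L[ℂ] H) (hT : IsSelfAdjoint T)
    (hint : ∀ x : H, ((inner ℂ (T x) x : ℂ)).re = ∫ y, f y ∂(E.μ x)) :
    T * T = T ↔
      ∃ Y : Set Ω, MeasurableSet Y ∧ E.toFun Y = 0 ∧ ∀ y ∉ Y, f y = 0 ∨ f y = 1 := by
  -- Selfadjointness of the projections
  have hsa : ∀ X : Set Ω, MeasurableSet X → IsSelfAdjoint (E.toFun X) := fun X hX =>
    ((ContinuousLinearMap.nonneg_iff_isPositive _).mp (E.pos' X hX)).isSelfAdjoint
  have hsym : ∀ X : Set Ω, MeasurableSet X →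
      ∀ u v : H, (inner ℂ (E.toFun X u) v : ℂ) = inner ℂ u (E.toFun X v) := fun X hX =>
    (ContinuousLinearMap.isSelfAdjoint_iff_isSymmetric.mp (hsa X hX))
  have hTsym : ∀ u v : H, (inner ℂ (T u) v : ℂ) = inner ℂ u (T v) :=
    (ContinuousLinearMap.isSelfAdjoint_iff_isSymmetric.mp hT)
  -- diagonal entries of projections are norms squared
  have hnormsq : ∀ X : Set Ω, MeasurableSet X → ∀ x : H,
      (inner ℂ (E.toFun X x) x : ℂ) = (‖E.toFun X x‖ : ℂ) ^ 2 := by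
    intro X hX x
    have h1 : E.toFun X (E.toFun X x) = E.toFun X x := by
      conv_rhs => rw [← E.proj' X hX]
      rfl
    calc (inner ℂ (E.toFun X x) x : ℂ) = inner ℂ (E.toFun X (E.toFun X x)) x := by rw [h1]
      _ = inner ℂ (E.toFun X x) (E.toFun X x) := by rw [hsym X hX]
      _ = (‖E.toFun X x‖ : ℂ) ^ 2 := inner_self_eq_norm_sq_to_K _
  have hμnorm : ∀ X : Set Ω, MeasurableSet X → ∀ x : H,
      ((E.μ x) X).toReal = ‖E.toFun X x‖ ^ 2 := by
    intro X hX x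
    rw [E.μ_spec x X hX, hnormsq X hX x]
    simp [← Complex.ofReal_pow]
  -- integrability of f
  have hInt : ∀ x : H, Integrable f (E.μ x) := by
    intro x
    haveI := E.μ_fin x
    refine (integrable_const (1 : ℝ)).mono' hf.aestronglyMeasurable
      (Filter.Eventually.of_forall fun y => ?_)
    rw [Real.norm_eq_abs, abs_of_nonneg (hf₀ y)]
    exact hf₁ y
  constructor
  · -- forward direction
    intro hTT
    -- if T z = z then f = 1 a.e. μ z
    have hone : ∀ z : H, T z = z → (E.μ z) {y | f y ≠ 1} = 0 := by
      intro z hz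
      haveI := E.μ_fin z
      have htot : ((E.μ z) Set.univ).toReal = ‖z‖ ^ 2 := by
        rw [E.μ_spec z Set.univ MeasurableSet.univ, E.total']
        show ((inner ℂ z z : ℂ)).re = ‖z‖ ^ 2
        rw [inner_self_eq_norm_sq_to_K (𝕜 := ℂ) z]
        simp [← Complex.ofReal_pow]
      have hintf : ∫ y, f y ∂(E.μ z) = ‖z‖ ^ 2 := by
        rw [← hint z, hz, inner_self_eq_norm_sq_to_K (𝕜 := ℂ) z]
        simp [← Complex.ofReal_pow]
      have hg : Integrable (fun y => 1 - f y) (E.μ z) := (integrable_const 1).sub (hInt z)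
      have hzero : ∫ y, (1 - f y) ∂(E.μ z) = 0 := by
        rw [integral_sub (integrable_const 1) (hInt z), integral_const, hintf, measureReal_def, htot]
        simp
      have hae : (fun y => 1 - f y) =ᵐ[E.μ z] 0 :=
        (integral_eq_zero_iff_of_nonneg (fun y => sub_nonneg.mpr (hf₁ y)) hg).mp hzero
      have : (E.μ z) {y | ¬ (1 - f y = (0 : Ω → ℝ) y)} = 0 := hae
      refine measure_mono_null (fun y hy => ?_) this
      simp only [Set.mem_setOf_eq, Pi.zero_apply, sub_eq_zero] at *
      exact fun h => hy h.symm
    -- if T z = 0 then f = 0 a.e. μ z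
    have hzero : ∀ z : H, T z = 0 → (E.μ z) {y | f y ≠ 0} = 0 := by
      intro z hz
      haveI := E.μ_fin z
      have hintf : ∫ y, f y ∂(E.μ z) = 0 := by
        rw [← hint z, hz]
        simp
      have hae : f =ᵐ[E.μ z] 0 :=
        (integral_eq_zero_iff_of_nonneg hf₀ (hInt z)).mp hintf
      exact hae
    refine ⟨{y | f y ≠ 0 ∧ f y ≠ 1}, ?_, ?_, fun y hy => by
      by_contra h
      push_neg at h
      exact hy ⟨h.1, h.2⟩⟩
    · have : {y | f y ≠ 0 ∧ f y ≠ 1} = (f ⁻¹' {0})ᶜ ∩ (f ⁻¹' {1})ᶜ := by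
        ext y; simp [Set.mem_preimage]
      rw [this]
      exact ((hf (measurableSet_singleton 0)).compl).inter
        ((hf (measurableSet_singleton 1)).compl)
    · -- E Y = 0
      have hYm : MeasurableSet {y | f y ≠ 0 ∧ f y ≠ 1} := by
        have : {y | f y ≠ 0 ∧ f y ≠ 1} = (f ⁻¹' {0})ᶜ ∩ (f ⁻¹' {1})ᶜ := by
          ext y; simp [Set.mem_preimage]
        rw [this]
        exact ((hf (measurableSet_singleton 0)).compl).inter
          ((hf (measurableSet_singleton 1)).compl)
      ext x
      have ha : T (T x) = T x := by
        conv_lhs => rw [show T (T x) = (T * T) x from rfl, hTT]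
      have hb : T (x - T x) = 0 := by
        rw [map_sub, ha, sub_self]
      have hEa : E.toFun {y | f y ≠ 0 ∧ f y ≠ 1} (T x) = 0 := by
        have hμ : (E.μ (T x)) {y | f y ≠ 0 ∧ f y ≠ 1} = 0 :=
          measure_mono_null (fun y hy => hy.2) (hone (T x) ha)
        have := hμnorm _ hYm (T x)
        rw [hμ] at this
        simp only [ENNReal.toReal_zero] at this
        have : ‖E.toFun {y | f y ≠ 0 ∧ f y ≠ 1} (T x)‖ = 0 := by
          nlinarith [norm_nonneg (E.toFun {y | f y ≠ 0 ∧ f y ≠ 1} (T x))]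
        exact norm_eq_zero.mp this
      have hEb : E.toFun {y | f y ≠ 0 ∧ f y ≠ 1} (x - T x) = 0 := by
        have hμ : (E.μ (x - T x)) {y | f y ≠ 0 ∧ f y ≠ 1} = 0 :=
          measure_mono_null (fun y hy => hy.1) (hzero (x - T x) hb)
        have := hμnorm _ hYm (x - T x)
        rw [hμ] at this
        simp only [ENNReal.toReal_zero] at this
        have : ‖E.toFun {y | f y ≠ 0 ∧ f y ≠ 1} (x - T x)‖ = 0 := by
          nlinarith [norm_nonneg (E.toFun {y | f y ≠ 0 ∧ f y ≠ 1} (x - T x))]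
        exact norm_eq_zero.mp this
      have : E.toFun {y | f y ≠ 0 ∧ f y ≠ 1} x
          = E.toFun {y | f y ≠ 0 ∧ f y ≠ 1} (T x)
            + E.toFun {y | f y ≠ 0 ∧ f y ≠ 1} (x - T x) := by
        rw [← map_add]
        congr 1
        abel
      rw [this, hEa, hEb]
      simp
  · -- backward direction
    rintro ⟨Y, hY, hEY, hfY⟩
    set S : Set Ω := {y | f y = 1} \ Y with hSdef
    have hS : MeasurableSet S := (hf (measurableSet_singleton 1)).diff hY
    have hTES : T = E.toFun S := by
      have key : ∀ x : H, (inner ℂ (T x) x : ℂ) = inner ℂ (E.toFun S x) x := by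
        intro x
        haveI := E.μ_fin x
        have hμY : (E.μ x) Y = 0 := by
          have h1 : ((E.μ x) Y).toReal = 0 := by
            rw [E.μ_spec x Y hY, hEY]
            simp
          rcases (ENNReal.toReal_eq_zero_iff _).mp h1 with h | h
          · exact h
          · exact absurd h (measure_ne_top _ _)
        have hfae : f =ᵐ[E.μ x] S.indicator (fun _ => (1 : ℝ)) := by
          have hYc : ∀ᵐ y ∂(E.μ x), y ∉ Y := by
            rw [MeasureTheory.ae_iff]
            simpa using hμY
          filter_upwards [hYc] with y hy
          rcases hfY y hy with h0 | h1
          · have : y ∉ S := fun hyS => by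
              rw [hSdef] at hyS
              exact absurd hyS.1 (by simp [h0])
            simp [Set.indicator_of_notMem this, h0]
          · have : y ∈ S := ⟨h1, hy⟩
            simp [Set.indicator_of_mem this, h1]
        have hre : ((inner ℂ (T x) x : ℂ)).re = ((inner ℂ (E.toFun S x) x : ℂ)).re := by
          rw [hint x, ← E.μ_spec x S hS, ← measureReal_def, ← integral_indicator_one hS]
          exact integral_congr_ae hfae
        have himT : ((inner ℂ (T x) x : ℂ)).im = 0 := by
          have h1 : (starRingEnd ℂ) (inner ℂ (T x) x : ℂ) = (inner ℂ (T x) x : ℂ) := by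
            rw [inner_conj_symm]
            exact (hTsym x x).symm
          have := congrArg Complex.im h1
          simp only [Complex.conj_im] at this
          linarith
        have himS : ((inner ℂ (E.toFun S x) x : ℂ)).im = 0 := by
          rw [hnormsq S hS x]
          simp [← Complex.ofReal_pow]
        exact Complex.ext hre (by rw [himT, himS])
      have : (T : H →ₗ[ℂ] H) = (E.toFun S : H →ₗ[ℂ] H) :=
        (ext_inner_map _ _).mp (fun x => key x)
      exact ContinuousLinearMap.coe_injective this
    rw [hTES]
    exact E.proj' S hS
end

section
/- Let A, B be positive operators with A + B ≤ I and AB = BA. If the two-element family is such that the only self-adjoint contractions D₁, D₂ with √A D₁ √A + √B D₂ √B = 0 satisfy √A D₁ √A = √B D₂ √B = 0, then AB = 0. -/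
set_option maxHeartbeats 1000000
set_option synthInstance.maxHeartbeats 1000000

open scoped ComplexOrder

variable {H : Type*} [NormedAddCommGroup H] [InnerProductSpace ℂ H] [CompleteSpace H]

/-- If `A, B ≥ 0` commute, `A + B ≤ 1`, and the only self-adjoint contractions `D₁, D₂` with
`√A D₁ √A + √B D₂ √B = 0` satisfy `√A D₁ √A = √B D₂ √B = 0`, then `A B = 0`. -/
theorem stmt_15 (A B : H →L[ℂ] H) (hA : 0 ≤ A) (hB : 0 ≤ B)
    (hsum : A + B ≤ 1) (hcomm : A * B = B * A)
    (hext : ∀ D₁ D₂ : H →L[ℂ] H, IsSelfAdjoint D₁ → IsSelfAdjoint D₂ →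
      ‖D₁‖ ≤ 1 → ‖D₂‖ ≤ 1 →
      CFC.sqrt A * D₁ * CFC.sqrt A + CFC.sqrt B * D₂ * CFC.sqrt B = 0 →
      CFC.sqrt A * D₁ * CFC.sqrt A = 0 ∧ CFC.sqrt B * D₂ * CFC.sqrt B = 0) :
    A * B = 0 := by
  have hsA : CFC.sqrt A * CFC.sqrt A = A := CFC.sqrt_mul_sqrt_self A hA
  have hsB : CFC.sqrt B * CFC.sqrt B = B := CFC.sqrt_mul_sqrt_self B hB
  have hsAp : (0 : H →L[ℂ] H) ≤ CFC.sqrt A := CFC.sqrt_nonneg A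
  have hsBp : (0 : H →L[ℂ] H) ≤ CFC.sqrt B := CFC.sqrt_nonneg B
  have hsAsa := (IsSelfAdjoint.of_nonneg hsAp)
  have hsBsa := (IsSelfAdjoint.of_nonneg hsBp)
  have hAsa := (IsSelfAdjoint.of_nonneg hA)
  have hBsa := (IsSelfAdjoint.of_nonneg hB)
  have hA1 : A ≤ 1 := le_trans (le_add_of_nonneg_right hB) hsum
  have hB1 : B ≤ 1 := le_trans (le_add_of_nonneg_left hA) hsum
  have hnA : ‖A‖ ≤ 1 := (CStarAlgebra.norm_le_one_iff_of_nonneg A hA).mpr hA1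
  have hnB : ‖B‖ ≤ 1 := (CStarAlgebra.norm_le_one_iff_of_nonneg B hB).mpr hB1
  set D₁ : H →L[ℂ] H := CFC.sqrt A * (B * B) * CFC.sqrt A with hD₁
  set E₂ : H →L[ℂ] H := CFC.sqrt B * (A * A) * CFC.sqrt B with hE₂
  have hD₁eq : D₁ = star (B * CFC.sqrt A) * (B * CFC.sqrt A) := by
    rw [hD₁, star_mul, hsAsa.star_eq, hBsa.star_eq]; simp [mul_assoc]
  have hE₂eq : E₂ = star (A * CFC.sqrt B) * (A * CFC.sqrt B) := by
    rw [hE₂, star_mul, hsBsa.star_eq, hAsa.star_eq]; simp [mul_assoc]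
  have hD₁pos : (0 : H →L[ℂ] H) ≤ D₁ := hD₁eq ▸ star_mul_self_nonneg _
  have hE₂pos : (0 : H →L[ℂ] H) ≤ E₂ := hE₂eq ▸ star_mul_self_nonneg _
  -- B * B ≤ 1 and A * A ≤ 1
  have hBB1 : B * B ≤ 1 := by
    rw [← CStarAlgebra.norm_le_one_iff_of_nonneg (B * B)
      (by simpa [hBsa.star_eq] using star_mul_self_nonneg B)]
    calc ‖B * B‖ ≤ ‖B‖ * ‖B‖ := norm_mul_le _ _
      _ ≤ 1 * 1 := by gcongr <;> exact norm_nonneg _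
      _ = 1 := one_mul 1
  have hAA1 : A * A ≤ 1 := by
    rw [← CStarAlgebra.norm_le_one_iff_of_nonneg (A * A)
      (by simpa [hAsa.star_eq] using star_mul_self_nonneg A)]
    calc ‖A * A‖ ≤ ‖A‖ * ‖A‖ := norm_mul_le _ _
      _ ≤ 1 * 1 := by gcongr <;> exact norm_nonneg _
      _ = 1 := one_mul 1
  -- D₁ ≤ 1, E₂ ≤ 1 via conjugation
  have hD₁1 : D₁ ≤ 1 := by
    have := star_left_conjugate_le_conjugate hBB1 (CFC.sqrt A)
    rw [hsAsa.star_eq] at this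
    calc D₁ ≤ CFC.sqrt A * 1 * CFC.sqrt A := this
      _ = A := by rw [mul_one, hsA]
      _ ≤ 1 := hA1
  have hE₂1 : E₂ ≤ 1 := by
    have := star_left_conjugate_le_conjugate hAA1 (CFC.sqrt B)
    rw [hsBsa.star_eq] at this
    calc E₂ ≤ CFC.sqrt B * 1 * CFC.sqrt B := this
      _ = B := by rw [mul_one, hsB]
      _ ≤ 1 := hB1
  have hnD₁ : ‖D₁‖ ≤ 1 := (CStarAlgebra.norm_le_one_iff_of_nonneg D₁ hD₁pos).mpr hD₁1
  have hnE₂ : ‖(-E₂)‖ ≤ 1 := by rw [norm_neg]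
                                exact (CStarAlgebra.norm_le_one_iff_of_nonneg E₂ hE₂pos).mpr hE₂1
  -- commutations
  have hcAB2 : A * (B * B) = (B * B) * A := by
    rw [← mul_assoc, hcomm, mul_assoc, hcomm, mul_assoc]
  -- key sum vanishes : √A D₁ √A + √B (-E₂) √B = A B² A - B A² B = 0
  have hkey : CFC.sqrt A * D₁ * CFC.sqrt A + CFC.sqrt B * (-E₂) * CFC.sqrt B = 0 := by
    have h1 : CFC.sqrt A * D₁ * CFC.sqrt A = A * (B * B) * A := by
      rw [hD₁]
      calc CFC.sqrt A * (CFC.sqrt A * (B * B) * CFC.sqrt A) * CFC.sqrt A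
          = (CFC.sqrt A * CFC.sqrt A) * (B * B) * (CFC.sqrt A * CFC.sqrt A) := by
            simp only [mul_assoc]
      _ = A * (B * B) * A := by rw [hsA]
    have h2 : CFC.sqrt B * E₂ * CFC.sqrt B = B * (A * A) * B := by
      rw [hE₂]
      calc CFC.sqrt B * (CFC.sqrt B * (A * A) * CFC.sqrt B) * CFC.sqrt B
          = (CFC.sqrt B * CFC.sqrt B) * (A * A) * (CFC.sqrt B * CFC.sqrt B) := by
            simp only [mul_assoc]
      _ = B * (A * A) * B := by rw [hsB]
    rw [mul_neg, neg_mul, h1, h2, add_neg_eq_zero]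
    calc A * (B * B) * A = (B * B) * A * A := by rw [hcAB2]
      _ = B * (B * A) * A := by simp [mul_assoc]
      _ = B * (A * B) * A := by rw [hcomm]
      _ = B * (A * (B * A)) := by simp [mul_assoc]
      _ = B * (A * (A * B)) := by rw [hcomm]
      _ = B * (A * A) * B := by simp [mul_assoc]
  obtain ⟨h0, -⟩ := hext D₁ (-E₂) (hD₁pos.isSelfAdjoint) (by
      have := hE₂pos.isSelfAdjoint
      simpa using this.neg) hnD₁ hnE₂ hkey
  -- h0 : √A D₁ √A = 0, i.e. A B² A = 0, i.e. (AB)² = 0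
  have hABBA : A * (B * B) * A = 0 := by
    calc A * (B * B) * A = (CFC.sqrt A * CFC.sqrt A) * (B * B) * (CFC.sqrt A * CFC.sqrt A) := by
          rw [hsA]
      _ = CFC.sqrt A * D₁ * CFC.sqrt A := by rw [hD₁]; simp only [mul_assoc]
      _ = 0 := h0
  have hsq : (A * B) * (A * B) = 0 := by
    calc (A * B) * (A * B) = A * (B * A) * B := by simp [mul_assoc]
      _ = A * (A * B) * B := by rw [hcomm]
      _ = A * (B * B) * A := by
          have h3 : A * A * (B * B) = A * (B * B) * A :=
            calc A * A * (B * B) = A * (A * (B * B)) := mul_assoc _ _ _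
              _ = A * ((B * B) * A) := by rw [hcAB2]
              _ = A * (B * B) * A := (mul_assoc _ _ _).symm
          calc A * (A * B) * B = (A * A) * (B * B) := by simp [mul_assoc]
            _ = A * (B * B) * A := h3
      _ = 0 := hABBA
  -- A*B self-adjoint
  have hABsa : IsSelfAdjoint (A * B) := by
    rw [IsSelfAdjoint, star_mul, hAsa.star_eq, hBsa.star_eq, hcomm]
  have : ‖A * B‖ * ‖A * B‖ = 0 := by
    rw [← CStarRing.norm_star_mul_self, hABsa.star_eq, hsq, norm_zero]
  have : ‖A * B‖ = 0 := by nlinarith [norm_nonneg (A * B)]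
  exact norm_eq_zero.mp this
end

section
/- Let (A_n) be a discrete commutative POVM such that A_k A_l = 0 for all k ≠ l fails, i.e., A_k A_l ≠ 0 for some k ≠ l. Then (A_n) is not extreme: it is a proper convex combination of two distinct POVMs, namely A_n ± √A_n D_n √A_n with D_k = √A_k A_l² √A_k, D_l = −√A_l A_k² √A_l, D_n = 0 otherwise. -/
set_option maxHeartbeats 1000000
set_option synthInstance.maxHeartbeats 1000000

open scoped ComplexOrder

variable {H : Type*} [NormedAddCommGroup H] [InnerProductSpace ℂ H] [CompleteSpace H]

/-- A commutative discrete POVM with `A_k A_l ≠ 0` for some `k ≠ l` is not extreme: it is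
the midpoint of the two distinct POVMs `A_n ± √A_n D_n √A_n`, with
`D_k = √A_k A_l² √A_k`, `D_l = −√A_l A_k² √A_l` and `D_n = 0` otherwise. -/
theorem stmt_19 {N : ℕ} (A : Fin N → H →L[ℂ] H)
    (hpovm : IsDiscretePOVM A)
    (hcomm : ∀ k l, A k * A l = A l * A k)
    (k l : Fin N) (hkl : k ≠ l) (hne : A k * A l ≠ 0)
    (D : Fin N → H →L[ℂ] H)
    (hD : D = fun n =>
      if n = k then CFC.sqrt (A k) * (A l * A l) * CFC.sqrt (A k)
      else if n = l then -(CFC.sqrt (A l) * (A k * A k) * CFC.sqrt (A l))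
      else 0) :
    IsDiscretePOVM (fun n => A n + CFC.sqrt (A n) * D n * CFC.sqrt (A n)) ∧
    IsDiscretePOVM (fun n => A n - CFC.sqrt (A n) * D n * CFC.sqrt (A n)) ∧
    (fun n => A n + CFC.sqrt (A n) * D n * CFC.sqrt (A n)) ≠
      (fun n => A n - CFC.sqrt (A n) * D n * CFC.sqrt (A n)) ∧
    (∀ n, A n = ((1 : ℂ) / 2) • (A n + CFC.sqrt (A n) * D n * CFC.sqrt (A n)) +
      ((1 : ℂ) / 2) • (A n - CFC.sqrt (A n) * D n * CFC.sqrt (A n))) ∧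
    ¬ IsExtremeDiscretePOVM A := by
  classical
  obtain ⟨hA, hsum⟩ := hpovm
  have hsa : ∀ n, IsSelfAdjoint (A n) := fun n => (hA n).isSelfAdjoint
  have hsq : ∀ n, CFC.sqrt (A n) * CFC.sqrt (A n) = A n :=
    fun n => CFC.sqrt_mul_sqrt_self (A n) (hA n)
  have hsqa : ∀ n, IsSelfAdjoint (CFC.sqrt (A n)) :=
    fun n => IsSelfAdjoint.of_nonneg (CFC.sqrt_nonneg _)
  -- abstract algebraic identities (with the square root as an opaque variable)
  have conj4 : ∀ (a x s : H →L[ℂ] H), s * s = a → s * (s * x * s) * s = a * x * a := by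
    intro a x s hs
    rw [← hs]; noncomm_ring
  have conj2 : ∀ (a s : H →L[ℂ] H), s * s = a → s * a * s = a * a := by
    intro a s hs
    rw [← hs]; noncomm_ring
  set P : H →L[ℂ] H := A k * (A l * A l) * A k with hPdef
  set Q : H →L[ℂ] H := A l * (A k * A k) * A l with hQdef
  set E : Fin N → H →L[ℂ] H := fun n => CFC.sqrt (A n) * D n * CFC.sqrt (A n) with hEdef
  -- basic facts about P and Q
  have hPstar : P = star (A l * A k) * (A l * A k) := by
    rw [star_mul, (hsa k).star_eq, (hsa l).star_eq]
    noncomm_ring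
  have hQstar : Q = star (A k * A l) * (A k * A l) := by
    rw [star_mul, (hsa k).star_eq, (hsa l).star_eq]
    noncomm_ring
  have hPpos : 0 ≤ P := hPstar ▸ star_mul_self_nonneg _
  have hQpos : 0 ≤ Q := hQstar ▸ star_mul_self_nonneg _
  have hPne : P ≠ 0 := by
    intro h0
    rw [hPstar] at h0
    apply hne
    rw [hcomm k l]
    exact (CStarRing.star_mul_self_eq_zero_iff _).mp h0
  have hPQ : P = Q := by
    have h := hcomm k l
    calc P = (A k * A l) * (A l * A k) := by rw [hPdef]; noncomm_ring
      _ = (A l * A k) * (A k * A l) := by rw [h]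
      _ = Q := by rw [hQdef]; noncomm_ring
  -- each A n is ≤ 1
  have hle1 : ∀ n, A n ≤ 1 := by
    intro n
    rw [← hsum]
    exact Finset.single_le_sum (fun i _ => hA i) (Finset.mem_univ n)
  -- a ≤ 1 and 0 ≤ a imply a * a ≤ a
  have hsqle : ∀ n, A n * A n ≤ A n := by
    intro n
    have h := star_left_conjugate_le_conjugate (hle1 n) (CFC.sqrt (A n))
    rw [(hsqa n).star_eq, mul_one, hsq n] at h
    rw [← conj2 (A n) (CFC.sqrt (A n)) (hsq n)]
    exact h
  have hsqle1 : ∀ n, A n * A n ≤ 1 := fun n => (hsqle n).trans (hle1 n)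
  have hPle : P ≤ A k := by
    have h := (hsa k).conjugate_le_conjugate (hsqle1 l)
    rw [mul_one] at h
    exact h.trans (hsqle k)
  have hQle : Q ≤ A l := by
    have h := (hsa l).conjugate_le_conjugate (hsqle1 k)
    rw [mul_one] at h
    exact h.trans (hsqle l)
  -- identify E
  have hEk : E k = P := by
    simp only [hEdef, hD, eq_self_iff_true, if_true]
    rw [conj4 (A k) (A l * A l) (CFC.sqrt (A k)) (hsq k), hPdef]
  have hEl : E l = -Q := by
    simp only [hEdef, hD]
    rw [if_neg (Ne.symm hkl : l ≠ k)]
    simp only [eq_self_iff_true, if_true, mul_neg, neg_mul]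
    rw [conj4 (A l) (A k * A k) (CFC.sqrt (A l)) (hsq l), hQdef]
  have hE0 : ∀ n, n ≠ k → n ≠ l → E n = 0 := by
    intro n hnk hnl
    simp only [hEdef, hD]
    rw [if_neg hnk, if_neg hnl, mul_zero, zero_mul]
  have hEfun : ∀ n, E n = (if n = k then P else 0) + (if n = l then -Q else 0) := by
    intro n
    by_cases h1 : n = k
    · rw [h1, if_pos rfl, if_neg hkl, add_zero, hEk]
    · by_cases h2 : n = l
      · rw [h2, if_neg (Ne.symm hkl : l ≠ k), if_pos rfl, zero_add, hEl]
      · rw [if_neg h1, if_neg h2, add_zero, hE0 n h1 h2]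
  have hEsum : ∑ n, E n = 0 := by
    simp only [hEfun]
    rw [Finset.sum_add_distrib, Finset.sum_ite_eq' Finset.univ k (fun _ => P),
      Finset.sum_ite_eq' Finset.univ l (fun _ => -Q)]
    simp [hPQ]
  -- positivity of entries
  have hpos_plus : ∀ n, 0 ≤ A n + E n := by
    intro n
    by_cases h1 : n = k
    · rw [h1, hEk]; exact add_nonneg (hA k) hPpos
    · by_cases h2 : n = l
      · rw [h2, hEl, ← sub_eq_add_neg, sub_nonneg]; exact hQle
      · rw [hE0 n h1 h2, add_zero]; exact hA n
  have hpos_minus : ∀ n, 0 ≤ A n - E n := by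
    intro n
    by_cases h1 : n = k
    · rw [h1, hEk, sub_nonneg]; exact hPle
    · by_cases h2 : n = l
      · rw [h2, hEl, sub_neg_eq_add]; exact add_nonneg (hA l) hQpos
      · rw [hE0 n h1 h2, sub_zero]; exact hA n
  have hsum_plus : ∑ n, (A n + E n) = 1 := by
    rw [Finset.sum_add_distrib, hsum, hEsum, add_zero]
  have hsum_minus : ∑ n, (A n - E n) = 1 := by
    rw [Finset.sum_sub_distrib, hsum, hEsum, sub_zero]
  have hPOVMplus : IsDiscretePOVM (fun n => A n + E n) := ⟨hpos_plus, hsum_plus⟩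
  have hPOVMminus : IsDiscretePOVM (fun n => A n - E n) := ⟨hpos_minus, hsum_minus⟩
  have hne' : (fun n => A n + E n) ≠ (fun n => A n - E n) := by
    intro h
    have hk := congrFun h k
    simp only [hEk] at hk
    rw [sub_eq_add_neg] at hk
    have h2 : P + P = 0 := eq_neg_iff_add_eq_zero.mp (add_left_cancel hk)
    apply hPne
    have h3 : (2 : ℂ) • P = 0 := by rw [two_smul]; exact h2
    simpa using (smul_eq_zero.mp h3).resolve_left (by norm_num)
  have hmid : ∀ n, A n = ((1 : ℂ) / 2) • (A n + E n) + ((1 : ℂ) / 2) • (A n - E n) := by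
    intro n
    rw [← smul_add, add_add_sub_cancel, ← two_smul ℂ (A n), smul_smul]
    norm_num
  refine ⟨hPOVMplus, hPOVMminus, hne', hmid, ?_⟩
  intro hext
  obtain ⟨hB, _⟩ := hext.2 (fun n => A n + E n) (fun n => A n - E n) (1 / 2)
    (by norm_num) (by norm_num) hPOVMplus hPOVMminus (by
      intro n
      have h := hmid n
      have e1 : (((1 : ℝ) / 2 : ℝ) : ℂ) = (1 : ℂ) / 2 := by norm_num
      have e2 : (((1 : ℝ) - 1 / 2 : ℝ) : ℂ) = (1 : ℂ) / 2 := by norm_num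
      rw [e1, e2]
      exact h)
  have hk := congrFun hB k
  simp only [hEk] at hk
  exact hPne (add_eq_left.mp hk)
end
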